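/- Assume E[|D₁|] < ∞ and fix z ≥ 0. Then the counting estimator Ĝ_n(z) := n⁻¹ Σ_{i,j=1}^n 1{ |X_j − Y_i| ≤ σz } − 2σ(n−1)z satisfies Var( Ĝ_n(z) ) ≤ C ( 1/n + σ + σ²n ), uniformly in n ∈ ℕ and σ ∈ (0,1], where C depends only on z and the distribution of D₁. -/

import Mathlib

open MeasureTheory Filter Set ProbabilityTheory

noncomputable section

/-- The i.i.d. dispersal model: `X₁,…,X_n` i.i.d. uniform on `[0,1]`, `D₁,…,D_n` i.i.d.
with density `f`, all `2n` variables jointly independent; the children are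
`Y_i = X_i + σ D_i`. -/
structure IsIIDModel {Ω : Type*} [MeasurableSpace Ω] (P : Measure Ω)
    (n : ℕ) (σ : ℝ) (f : ℝ → ℝ) (X D : Fin n → Ω → ℝ) : Prop where
  prob : IsProbabilityMeasure P
  sigma_pos : 0 < σ
  sigma_le_one : σ ≤ 1
  f_meas : Measurable f
  f_nonneg : ∀ z, 0 ≤ f z
  f_prob : ∫ z, f z = 1
  X_meas : ∀ i, Measurable (X i)
  D_meas : ∀ i, Measurable (D i)
  lawX : ∀ i, Measure.map (X i) P = volume.restrict (Set.Icc (0:ℝ) 1)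
  lawD : ∀ i, Measure.map (D i) P = volume.withDensity fun z => ENNReal.ofReal (f z)
  indep : iIndepFun (m := fun _ : Fin n ⊕ Fin n => Real.measurableSpace) (Sum.elim X D) P

/-- The children `Y_i = X_i + σ D_i`. -/
def Ychild {Ω : Type*} {n : ℕ} (σ : ℝ) (X D : Fin n → Ω → ℝ) (i : Fin n) (ω : Ω) : ℝ :=
  X i ω + σ * D i ω

/-- `Xnear` is a nearest-parent selection: `Xnear i` takes values among the parents and
minimizes the distance to the child `Y_i`. -/
def IsNearestParent {Ω : Type*} [MeasurableSpace Ω] {n : ℕ} (σ : ℝ) (X D Xnear : Fin n → Ω → ℝ) : Prop :=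
  (∀ i, Measurable (Xnear i)) ∧
  (∀ (i : Fin n) (ω : Ω), ∃ j, Xnear i ω = X j ω) ∧
  (∀ (i j : Fin n) (ω : Ω), |Ychild σ X D i ω - Xnear i ω| ≤ |Ychild σ X D i ω - X j ω|)

end

noncomputable section AuxProof

section
variable {Ω ι : Type*} [MeasurableSpace Ω]

lemma aux_indep_quad [DecidableEq ι] {P : Measure Ω}
    {Z : ι → Ω → ℝ} (h : iIndepFun (m := fun _ => Real.measurableSpace) Z P)
    (hZ : ∀ i, Measurable (Z i)) (a b c d e : ι)
    (h1 : b ≠ a) (h2 : c ≠ a) (h3 : d ≠ a) (h4 : e ≠ a) :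
    IndepFun (fun ω => ((Z b ω, Z c ω), (Z d ω, Z e ω))) (Z a) P := by
  classical
  have hb : b ∈ ({b, c, d, e} : Finset ι) := by simp
  have hc : c ∈ ({b, c, d, e} : Finset ι) := by simp
  have hd : d ∈ ({b, c, d, e} : Finset ι) := by simp
  have he : e ∈ ({b, c, d, e} : Finset ι) := by simp
  have ha : a ∈ ({a} : Finset ι) := by simp
  have hdisj : Disjoint ({b, c, d, e} : Finset ι) ({a} : Finset ι) := by
    simp [Finset.disjoint_left, h1, h2, h3, h4]
  have base := h.indepFun_finset ({b, c, d, e} : Finset ι) ({a} : Finset ι) hdisj hZ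
  let g1 : (∀ i : ({b, c, d, e} : Finset ι), ℝ) → (ℝ × ℝ) × (ℝ × ℝ) :=
    fun v => ((v ⟨b, hb⟩, v ⟨c, hc⟩), (v ⟨d, hd⟩, v ⟨e, he⟩))
  let g2 : (∀ i : ({a} : Finset ι), ℝ) → ℝ := fun v => v ⟨a, ha⟩
  have hg1 : Measurable g1 := by fun_prop
  have hg2 : Measurable g2 := by fun_prop
  exact base.comp hg1 hg2

lemma aux_indep_triple [DecidableEq ι] {P : Measure Ω}
    {Z : ι → Ω → ℝ} (h : iIndepFun (m := fun _ => Real.measurableSpace) Z P)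
    (hZ : ∀ i, Measurable (Z i)) (a b c d e k : ι)
    (had : a ≠ d) (hae : a ≠ e) (hak : a ≠ k)
    (hbd : b ≠ d) (hbe : b ≠ e) (hbk : b ≠ k)
    (hcd : c ≠ d) (hce : c ≠ e) (hck : c ≠ k) :
    IndepFun (fun ω => (Z a ω, Z b ω, Z c ω)) (fun ω => (Z d ω, Z e ω, Z k ω)) P := by
  classical
  have ha : a ∈ ({a, b, c} : Finset ι) := by simp
  have hb : b ∈ ({a, b, c} : Finset ι) := by simp
  have hc : c ∈ ({a, b, c} : Finset ι) := by simp
  have hd : d ∈ ({d, e, k} : Finset ι) := by simp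
  have he : e ∈ ({d, e, k} : Finset ι) := by simp
  have hk : k ∈ ({d, e, k} : Finset ι) := by simp
  have hdisj : Disjoint ({a, b, c} : Finset ι) ({d, e, k} : Finset ι) := by
    simp only [Finset.disjoint_left, Finset.mem_insert, Finset.mem_singleton]
    rintro x (rfl | rfl | rfl) <;> push_neg <;> tauto
  have base := h.indepFun_finset ({a, b, c} : Finset ι) ({d, e, k} : Finset ι) hdisj hZ
  let g1 : (∀ i : ({a, b, c} : Finset ι), ℝ) → ℝ × ℝ × ℝ :=
    fun v => (v ⟨a, ha⟩, v ⟨b, hb⟩, v ⟨c, hc⟩)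
  let g2 : (∀ i : ({d, e, k} : Finset ι), ℝ) → ℝ × ℝ × ℝ :=
    fun v => (v ⟨d, hd⟩, v ⟨e, he⟩, v ⟨k, hk⟩)
  have hg1 : Measurable g1 := by fun_prop
  have hg2 : Measurable g2 := by fun_prop
  exact base.comp hg1 hg2

lemma aux_key (P : Measure Ω) [IsProbabilityMeasure P]
    {E : Type*} [MeasurableSpace E] (U : Ω → E) (V : Ω → ℝ)
    (hU : Measurable U) (hV : Measurable V)
    (hind : IndepFun U V P)
    (hlaw : Measure.map V P = volume.restrict (Set.Icc (0:ℝ) 1))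
    (g φ : E → ℝ) (hg : Measurable g) (hφ : Measurable φ)
    (hφ0 : ∀ p, 0 ≤ φ p) (hφ1 : ∀ p, φ p ≤ 1) (r : ℝ) (hr : 0 ≤ r) :
    ∫ ω, φ (U ω) * (if |V ω - g (U ω)| ≤ r then (1:ℝ) else 0) ∂P
      ≤ 2 * r * ∫ ω, φ (U ω) ∂P := by
  have hmap : P.map (fun ω => (U ω, V ω)) = (P.map U).prod (P.map V) :=
    (indepFun_iff_map_prod_eq_prod_map_map hU.aemeasurable hV.aemeasurable).1 hind
  set F : E × ℝ → ℝ := fun p => φ p.1 * (if |p.2 - g p.1| ≤ r then (1:ℝ) else 0) with hF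
  have hFmeas : Measurable F := by
    apply (hφ.comp measurable_fst).mul
    exact Measurable.ite
      (measurableSet_le ((measurable_snd.sub (hg.comp measurable_fst)).abs) measurable_const)
      measurable_const measurable_const
  have hF0 : ∀ p, 0 ≤ F p := fun p => mul_nonneg (hφ0 _) (by split_ifs <;> norm_num)
  have hF1 : ∀ p, F p ≤ 1 := fun p => by
    have h2 : (if |p.2 - g p.1| ≤ r then (1:ℝ) else 0) ≤ 1 := by split_ifs <;> norm_num
    calc F p ≤ 1 * 1 := mul_le_mul (hφ1 _) h2 (by split_ifs <;> norm_num) zero_le_one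
    _ = 1 := by ring
  haveI : IsProbabilityMeasure (P.map U) := Measure.isProbabilityMeasure_map hU.aemeasurable
  haveI : IsProbabilityMeasure (P.map V) := Measure.isProbabilityMeasure_map hV.aemeasurable
  have hFint : Integrable F ((P.map U).prod (P.map V)) := by
    refine (integrable_const (1:ℝ)).mono' hFmeas.aestronglyMeasurable
      (Filter.Eventually.of_forall fun p => ?_)
    rw [Real.norm_eq_abs, abs_of_nonneg (hF0 p)]; exact hF1 p
  have key1 : ∫ ω, F (U ω, V ω) ∂P = ∫ p, F p ∂((P.map U).prod (P.map V)) := by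
    rw [← hmap, integral_map (hU.aemeasurable.prodMk hV.aemeasurable)
      hFmeas.aestronglyMeasurable]
  have key2 : ∫ p, F p ∂((P.map U).prod (P.map V))
      = ∫ e, ∫ v, F (e, v) ∂(P.map V) ∂(P.map U) := integral_prod F hFint
  have inner_le : ∀ e, ∫ v, F (e, v) ∂(P.map V) ≤ 2 * r * φ e := by
    intro e
    have heq : (fun v => F (e, v))
        = fun v => φ e * (Set.Icc (g e - r) (g e + r)).indicator (fun _ => (1:ℝ)) v := by
      funext v
      simp only [hF, Set.indicator_apply, Set.mem_Icc]
      congr 1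
      refine if_congr ?_ rfl rfl
      rw [abs_le]
      constructor <;> intro h <;> constructor <;> linarith [h.1, h.2]
    rw [heq, integral_const_mul _ _, integral_indicator_const (1:ℝ) measurableSet_Icc]
    have hle : (P.map V) (Set.Icc (g e - r) (g e + r)) ≤ ENNReal.ofReal (2 * r) := by
      rw [hlaw]
      calc (volume.restrict (Set.Icc (0:ℝ) 1)) (Set.Icc (g e - r) (g e + r))
          ≤ volume (Set.Icc (g e - r) (g e + r)) := Measure.restrict_apply_le _ _
        _ = ENNReal.ofReal (2 * r) := by rw [Real.volume_Icc]; ring_nf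
    have := ENNReal.toReal_le_of_le_ofReal (by linarith) hle
    calc φ e * ((P.map V) (Set.Icc (g e - r) (g e + r))).toReal • (1:ℝ)
        = ((P.map V) (Set.Icc (g e - r) (g e + r))).toReal * φ e := by
          rw [smul_eq_mul]; ring
      _ ≤ (2 * r) * φ e := mul_le_mul_of_nonneg_right this (hφ0 e)
  have houter : ∫ e, ∫ v, F (e, v) ∂(P.map V) ∂(P.map U) ≤ ∫ e, 2 * r * φ e ∂(P.map U) := by
    refine integral_mono_of_nonneg (Filter.Eventually.of_forall fun e =>
      integral_nonneg fun v => hF0 _) ?_ (Filter.Eventually.of_forall inner_le)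
    exact ((integrable_const (1:ℝ)).mono' hφ.aestronglyMeasurable
      (Filter.Eventually.of_forall fun e => by
        rw [Real.norm_eq_abs, abs_of_nonneg (hφ0 e)]; exact hφ1 e)).const_mul _
  have hfin : ∫ e, 2 * r * φ e ∂(P.map U) = 2 * r * ∫ ω, φ (U ω) ∂P := by
    rw [integral_const_mul _ _, integral_map hU.aemeasurable hφ.aestronglyMeasurable]
  calc ∫ ω, φ (U ω) * (if |V ω - g (U ω)| ≤ r then (1:ℝ) else 0) ∂P
      = ∫ ω, F (U ω, V ω) ∂P := rfl
    _ = ∫ e, ∫ v, F (e, v) ∂(P.map V) ∂(P.map U) := by rw [key1, key2]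
    _ ≤ ∫ e, 2 * r * φ e ∂(P.map U) := houter
    _ = 2 * r * ∫ ω, φ (U ω) ∂P := hfin

lemma aux_step [DecidableEq ι] (P : Measure Ω) [IsProbabilityMeasure P]
    (Z : ι → Ω → ℝ) (h : iIndepFun (m := fun _ => Real.measurableSpace) Z P)
    (hZ : ∀ i, Measurable (Z i)) (a b c d e : ι)
    (h1 : b ≠ a) (h2 : c ≠ a) (h3 : d ≠ a) (h4 : e ≠ a)
    (hlaw : Measure.map (Z a) P = volume.restrict (Set.Icc (0:ℝ) 1))
    (g φ : (ℝ × ℝ) × (ℝ × ℝ) → ℝ) (hg : Measurable g) (hφ : Measurable φ)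
    (hφ0 : ∀ p, 0 ≤ φ p) (hφ1 : ∀ p, φ p ≤ 1) (r : ℝ) (hr : 0 ≤ r) :
    ∫ ω, φ ((Z b ω, Z c ω), (Z d ω, Z e ω)) *
        (if |Z a ω - g ((Z b ω, Z c ω), (Z d ω, Z e ω))| ≤ r then (1:ℝ) else 0) ∂P
      ≤ 2 * r * ∫ ω, φ ((Z b ω, Z c ω), (Z d ω, Z e ω)) ∂P :=
  aux_key P (fun ω => ((Z b ω, Z c ω), (Z d ω, Z e ω))) (Z a)
    (((hZ b).prodMk (hZ c)).prodMk ((hZ d).prodMk (hZ e))) (hZ a)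
    (aux_indep_quad h hZ a b c d e h1 h2 h3 h4) hlaw g φ hg hφ hφ0 hφ1 r hr

end
noncomputable section AuxVar

lemma aux_integrable_of_bdd {Ω : Type*} [MeasurableSpace Ω] {P : Measure Ω}
    [IsProbabilityMeasure P] {h : Ω → ℝ} (hm : Measurable h) (c : ℝ)
    (hb : ∀ ω, ‖h ω‖ ≤ c) : Integrable h P :=
  (integrable_const c).mono' hm.aestronglyMeasurable (Filter.Eventually.of_forall hb)

/-- indicator used in the counting estimator -/
def Ind {Ω : Type*} (σ z : ℝ) {n : ℕ} (X D : Fin n → Ω → ℝ) (i j : Fin n) (ω : Ω) : ℝ :=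
  if |X j ω - Ychild σ X D i ω| ≤ σ * z then 1 else 0

variable {Ω : Type*} [MeasurableSpace Ω] {P : Measure Ω} {n : ℕ} {σ z : ℝ} {f : ℝ → ℝ}
  {X D : Fin n → Ω → ℝ}

lemma Ind_nonneg (i j : Fin n) (ω : Ω) : 0 ≤ Ind σ z X D i j ω := by
  unfold Ind; split_ifs <;> norm_num

lemma Ind_le_one (i j : Fin n) (ω : Ω) : Ind σ z X D i j ω ≤ 1 := by
  unfold Ind; split_ifs <;> norm_num

lemma Ind_meas (hX : ∀ i, Measurable (X i)) (hD : ∀ i, Measurable (D i)) (i j : Fin n) :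
    Measurable (Ind σ z X D i j) := by
  unfold Ind Ychild
  exact Measurable.ite
    (measurableSet_le (((hX j).sub ((hX i).add (measurable_const.mul (hD i)))).abs)
      measurable_const) measurable_const measurable_const

lemma Ind_int [IsProbabilityMeasure P] (hX : ∀ i, Measurable (X i))
    (hD : ∀ i, Measurable (D i)) (i j : Fin n) : Integrable (Ind σ z X D i j) P :=
  aux_integrable_of_bdd (Ind_meas hX hD i j) 1 (fun ω => by
    rw [Real.norm_eq_abs, abs_of_nonneg (Ind_nonneg i j ω)]; exact Ind_le_one i j ω)

lemma Ind_mul_int [IsProbabilityMeasure P] (hX : ∀ i, Measurable (X i))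
    (hD : ∀ i, Measurable (D i)) (i j k l : Fin n) :
    Integrable (fun ω => Ind σ z X D i j ω * Ind σ z X D k l ω) P :=
  aux_integrable_of_bdd ((Ind_meas hX hD i j).mul (Ind_meas hX hD k l)) 1 (fun ω => by
    rw [Real.norm_eq_abs, abs_of_nonneg (mul_nonneg (Ind_nonneg i j ω) (Ind_nonneg k l ω))]
    nlinarith [Ind_nonneg (σ := σ) (z := z) (X := X) (D := D) i j ω, Ind_le_one (σ := σ) (z := z) (X := X) (D := D) i j ω,
      Ind_nonneg (σ := σ) (z := z) (X := X) (D := D) k l ω, Ind_le_one (σ := σ) (z := z) (X := X) (D := D) k l ω])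

end AuxVar

section Quant
variable {Ω : Type*} [MeasurableSpace Ω] {P : Measure Ω} {n : ℕ} {σ z : ℝ} {f : ℝ → ℝ}
  {X D : Fin n → Ω → ℝ}

lemma aux_hZm (hM : IsIIDModel P n σ f X D) : ∀ s, Measurable (Sum.elim X D s) := by
  rintro (i | i)
  exacts [hM.X_meas i, hM.D_meas i]

lemma aux_L1 (hM : IsIIDModel P n σ f X D) (hz : 0 ≤ z)
    {i j : Fin n} (hij : i ≠ j) : ∫ ω, Ind σ z X D i j ω ∂P ≤ 2 * (σ * z) := by
  haveI := hM.prob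
  have hσz : 0 ≤ σ * z := mul_nonneg hM.sigma_pos.le hz
  have hstep := aux_step P (Sum.elim X D) hM.indep (aux_hZm hM) (Sum.inl j) (Sum.inl i)
    (Sum.inr i) (Sum.inl i) (Sum.inr i) (by simp [hij]) (by simp) (by simp [hij]) (by simp)
    (hM.lawX j) (fun p => p.1.1 + σ * p.1.2) (fun _ => 1) (by fun_prop) measurable_const
    (fun _ => zero_le_one) (fun _ => le_refl 1) (σ * z) hσz
  simp only [Sum.elim_inl, Sum.elim_inr, one_mul, integral_const, measure_univ,
    ENNReal.toReal_one, probReal_univ, smul_eq_mul, mul_one] at hstep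
  refine le_trans (le_of_eq ?_) hstep
  unfold Ind Ychild
  rfl

lemma aux_L2a (hM : IsIIDModel P n σ f X D) (hz : 0 ≤ z) {i j l : Fin n}
    (hij : i ≠ j) (hil : i ≠ l) (hjl : j ≠ l) :
    ∫ ω, Ind σ z X D i j ω * Ind σ z X D i l ω ∂P ≤ 8 * (σ * z) ^ 2 := by
  haveI := hM.prob
  have hσz : 0 ≤ σ * z := mul_nonneg hM.sigma_pos.le hz
  have hstep := aux_step P (Sum.elim X D) hM.indep (aux_hZm hM) (Sum.inl j) (Sum.inl i)
    (Sum.inr i) (Sum.inl l) (Sum.inl l) (by simp [hij]) (by simp)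
    (by simp [hjl.symm]) (by simp [hjl.symm]) (hM.lawX j)
    (fun p => p.1.1 + σ * p.1.2)
    (fun p => if |p.2.1 - (p.1.1 + σ * p.1.2)| ≤ σ * z then (1:ℝ) else 0)
    (by fun_prop)
    (Measurable.ite (measurableSet_le (((measurable_fst.comp measurable_snd).sub
      ((measurable_fst.comp measurable_fst).add
        (measurable_const.mul (measurable_snd.comp measurable_fst)))).abs)
      measurable_const) measurable_const measurable_const)
    (fun p => by split_ifs <;> norm_num)
    (fun p => by split_ifs <;> norm_num) (σ * z) hσz
  simp only [Sum.elim_inl, Sum.elim_inr] at hstep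
  calc ∫ ω, Ind σ z X D i j ω * Ind σ z X D i l ω ∂P
      = ∫ ω, Ind σ z X D i l ω * Ind σ z X D i j ω ∂P := by
        congr 1; funext ω; ring
    _ ≤ 2 * (σ * z) * ∫ ω, Ind σ z X D i l ω ∂P := by
        refine le_trans (le_of_eq ?_) (le_trans hstep (le_of_eq ?_)) <;>
          (unfold Ind Ychild; rfl)
    _ ≤ 2 * (σ * z) * (2 * (σ * z)) := by
        exact mul_le_mul_of_nonneg_left (aux_L1 hM hz hil) (by linarith)
    _ ≤ 8 * (σ * z) ^ 2 := by nlinarith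

lemma aux_L2b (hM : IsIIDModel P n σ f X D) (hz : 0 ≤ z) {i j l : Fin n}
    (hij : i ≠ j) (hil : i ≠ l) (hjl : j ≠ l) :
    ∫ ω, Ind σ z X D i j ω * Ind σ z X D j l ω ∂P ≤ 8 * (σ * z) ^ 2 := by
  haveI := hM.prob
  have hσz : 0 ≤ σ * z := mul_nonneg hM.sigma_pos.le hz
  have hstep := aux_step P (Sum.elim X D) hM.indep (aux_hZm hM) (Sum.inl l) (Sum.inl i)
    (Sum.inr i) (Sum.inl j) (Sum.inr j) (by simp [hil]) (by simp)
    (by simp [hjl]) (by simp) (hM.lawX l)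
    (fun p => p.2.1 + σ * p.2.2)
    (fun p => if |p.2.1 - (p.1.1 + σ * p.1.2)| ≤ σ * z then (1:ℝ) else 0)
    (by fun_prop)
    (Measurable.ite (measurableSet_le (((measurable_fst.comp measurable_snd).sub
      ((measurable_fst.comp measurable_fst).add
        (measurable_const.mul (measurable_snd.comp measurable_fst)))).abs)
      measurable_const) measurable_const measurable_const)
    (fun p => by split_ifs <;> norm_num)
    (fun p => by split_ifs <;> norm_num) (σ * z) hσz
  simp only [Sum.elim_inl, Sum.elim_inr] at hstep
  calc ∫ ω, Ind σ z X D i j ω * Ind σ z X D j l ω ∂P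
      ≤ 2 * (σ * z) * ∫ ω, Ind σ z X D i j ω ∂P := by
        refine le_trans (le_of_eq ?_) (le_trans hstep (le_of_eq ?_)) <;>
          (unfold Ind Ychild; rfl)
    _ ≤ 2 * (σ * z) * (2 * (σ * z)) := by
        exact mul_le_mul_of_nonneg_left (aux_L1 hM hz hij) (by linarith)
    _ ≤ 8 * (σ * z) ^ 2 := by nlinarith

lemma aux_L2b' (hM : IsIIDModel P n σ f X D) (hz : 0 ≤ z) {i j k : Fin n}
    (hij : i ≠ j) (hik : i ≠ k) (hjk : j ≠ k) :
    ∫ ω, Ind σ z X D i j ω * Ind σ z X D k i ω ∂P ≤ 8 * (σ * z) ^ 2 := by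
  haveI := hM.prob
  have hσz : 0 ≤ σ * z := mul_nonneg hM.sigma_pos.le hz
  have hstep := aux_step P (Sum.elim X D) hM.indep (aux_hZm hM) (Sum.inl j) (Sum.inl i)
    (Sum.inr i) (Sum.inl k) (Sum.inr k) (by simp [hij]) (by simp)
    (by simp [hjk.symm]) (by simp) (hM.lawX j)
    (fun p => p.1.1 + σ * p.1.2)
    (fun p => if |p.1.1 - (p.2.1 + σ * p.2.2)| ≤ σ * z then (1:ℝ) else 0)
    (by fun_prop)
    (Measurable.ite (measurableSet_le (((measurable_fst.comp measurable_fst).sub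
      ((measurable_fst.comp measurable_snd).add
        (measurable_const.mul (measurable_snd.comp measurable_snd)))).abs)
      measurable_const) measurable_const measurable_const)
    (fun p => by split_ifs <;> norm_num)
    (fun p => by split_ifs <;> norm_num) (σ * z) hσz
  simp only [Sum.elim_inl, Sum.elim_inr] at hstep
  calc ∫ ω, Ind σ z X D i j ω * Ind σ z X D k i ω ∂P
      = ∫ ω, Ind σ z X D k i ω * Ind σ z X D i j ω ∂P := by
        congr 1; funext ω; ring
    _ ≤ 2 * (σ * z) * ∫ ω, Ind σ z X D k i ω ∂P := by
        refine le_trans (le_of_eq ?_) (le_trans hstep (le_of_eq ?_)) <;>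
          (unfold Ind Ychild; rfl)
    _ ≤ 2 * (σ * z) * (2 * (σ * z)) := by
        exact mul_le_mul_of_nonneg_left (aux_L1 hM hz (Ne.symm hik)) (by linarith)
    _ ≤ 8 * (σ * z) ^ 2 := by nlinarith

lemma aux_L2c (hM : IsIIDModel P n σ f X D) (hz : 0 ≤ z) {i j k : Fin n}
    (hij : i ≠ j) (hik : i ≠ k) (hjk : j ≠ k) :
    ∫ ω, Ind σ z X D i j ω * Ind σ z X D k j ω ∂P ≤ 8 * (σ * z) ^ 2 := by
  haveI := hM.prob
  have hσz : 0 ≤ σ * z := mul_nonneg hM.sigma_pos.le hz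
  set Jf : Ω → ℝ := fun ω =>
    if |(X i ω + σ * D i ω) - (X k ω + σ * D k ω)| ≤ 2 * (σ * z) then 1 else 0 with hJf
  have hJmeas : Measurable Jf := by
    refine Measurable.ite (measurableSet_le ?_ measurable_const) measurable_const
      measurable_const
    exact (((hM.X_meas i).add (measurable_const.mul (hM.D_meas i))).sub
      ((hM.X_meas k).add (measurable_const.mul (hM.D_meas k)))).abs
  have hJ0 : ∀ ω, 0 ≤ Jf ω := fun ω => by rw [hJf]; dsimp only; split_ifs <;> norm_num
  have hJ1 : ∀ ω, Jf ω ≤ 1 := fun ω => by rw [hJf]; dsimp only; split_ifs <;> norm_num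
  -- pointwise bound
  have hpt : ∀ ω, Ind σ z X D i j ω * Ind σ z X D k j ω ≤ Jf ω * Ind σ z X D i j ω := by
    intro ω
    unfold Ind Ychild
    rw [hJf]
    dsimp only
    by_cases h1 : |X j ω - (X i ω + σ * D i ω)| ≤ σ * z
    · by_cases h2 : |X j ω - (X k ω + σ * D k ω)| ≤ σ * z
      · have h3 : |(X i ω + σ * D i ω) - (X k ω + σ * D k ω)| ≤ 2 * (σ * z) := by
          have a1 := abs_le.mp h1
          have a2 := abs_le.mp h2
          rw [abs_le]
          constructor <;> linarith [a1.1, a1.2, a2.1, a2.2]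
        simp [h1, h2, h3]
      · simp only [h1, h2, if_true, if_false, mul_zero]
        positivity
    · simp [h1]
  have hint1 : Integrable (fun ω => Ind σ z X D i j ω * Ind σ z X D k j ω) P :=
    Ind_mul_int hM.X_meas hM.D_meas i j k j
  have hint2 : Integrable (fun ω => Jf ω * Ind σ z X D i j ω) P := by
    refine aux_integrable_of_bdd (hJmeas.mul (Ind_meas hM.X_meas hM.D_meas i j)) 1 fun ω => ?_
    rw [Real.norm_eq_abs, abs_of_nonneg (mul_nonneg (hJ0 ω) (Ind_nonneg i j ω))]
    nlinarith [hJ0 ω, hJ1 ω, Ind_nonneg (σ := σ) (z := z) (X := X) (D := D) i j ω,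
      Ind_le_one (σ := σ) (z := z) (X := X) (D := D) i j ω]
  have step1 : ∫ ω, Ind σ z X D i j ω * Ind σ z X D k j ω ∂P
      ≤ ∫ ω, Jf ω * Ind σ z X D i j ω ∂P := integral_mono hint1 hint2 hpt
  -- step 2 : ∫ Jf * Ind i j ≤ 2 σ z ∫ Jf
  have hstep2 := aux_step P (Sum.elim X D) hM.indep (aux_hZm hM) (Sum.inl j) (Sum.inl i)
    (Sum.inr i) (Sum.inl k) (Sum.inr k) (by simp [hij]) (by simp)
    (by simp [hjk.symm]) (by simp) (hM.lawX j)
    (fun p => p.1.1 + σ * p.1.2)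
    (fun p => if |(p.1.1 + σ * p.1.2) - (p.2.1 + σ * p.2.2)| ≤ 2 * (σ * z) then (1:ℝ) else 0)
    (by fun_prop)
    (Measurable.ite (measurableSet_le ((((measurable_fst.comp measurable_fst).add
      (measurable_const.mul (measurable_snd.comp measurable_fst))).sub
      ((measurable_fst.comp measurable_snd).add
        (measurable_const.mul (measurable_snd.comp measurable_snd)))).abs)
      measurable_const) measurable_const measurable_const)
    (fun p => by split_ifs <;> norm_num)
    (fun p => by split_ifs <;> norm_num) (σ * z) hσz
  simp only [Sum.elim_inl, Sum.elim_inr] at hstep2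
  have step2 : ∫ ω, Jf ω * Ind σ z X D i j ω ∂P ≤ 2 * (σ * z) * ∫ ω, Jf ω ∂P := by
    refine le_trans (le_of_eq ?_) (le_trans hstep2 (le_of_eq ?_))
    · unfold Ind Ychild; rw [hJf]; rfl
    · rw [hJf]; rfl
  -- step 3 : ∫ Jf ≤ 2 * (2 σ z)
  have hstep3 := aux_step P (Sum.elim X D) hM.indep (aux_hZm hM) (Sum.inl i) (Sum.inr i)
    (Sum.inl k) (Sum.inr k) (Sum.inr k) (by simp) (by simp [hik.symm]) (by simp) (by simp)
    (hM.lawX i)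
    (fun p => p.1.2 + σ * p.2.1 - σ * p.1.1) (fun _ => 1) (by fun_prop) measurable_const
    (fun _ => zero_le_one) (fun _ => le_refl 1) (2 * (σ * z)) (by linarith)
  simp only [Sum.elim_inl, Sum.elim_inr, one_mul, integral_const, measure_univ,
    ENNReal.toReal_one, probReal_univ, smul_eq_mul, mul_one] at hstep3
  have step3 : ∫ ω, Jf ω ∂P ≤ 2 * (2 * (σ * z)) := by
    refine le_trans (le_of_eq ?_) hstep3
    have harg : ∀ ω, X i ω + σ * D i ω - (X k ω + σ * D k ω)
        = X i ω - (X k ω + σ * D k ω - σ * D i ω) := fun ω => by ring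
    rw [hJf]
    simp only [harg]
    rfl
  have hJint_nonneg : 0 ≤ ∫ ω, Jf ω ∂P := integral_nonneg hJ0
  calc ∫ ω, Ind σ z X D i j ω * Ind σ z X D k j ω ∂P
      ≤ 2 * (σ * z) * ∫ ω, Jf ω ∂P := le_trans step1 step2
    _ ≤ 2 * (σ * z) * (2 * (2 * (σ * z))) := mul_le_mul_of_nonneg_left step3 (by linarith)
    _ = 8 * (σ * z) ^ 2 := by ring

lemma aux_zero (hM : IsIIDModel P n σ f X D) {i j k l : Fin n}
    (hik : i ≠ k) (hil : i ≠ l) (hjk : j ≠ k) (hjl : j ≠ l) :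
    ∫ ω, Ind σ z X D i j ω * Ind σ z X D k l ω ∂P
      = (∫ ω, Ind σ z X D i j ω ∂P) * ∫ ω, Ind σ z X D k l ω ∂P := by
  haveI := hM.prob
  have hind3 := aux_indep_triple hM.indep (aux_hZm hM) (Sum.inl i) (Sum.inr i) (Sum.inl j)
    (Sum.inl k) (Sum.inr k) (Sum.inl l)
    (by simp [hik]) (by simp) (by simp [hil]) (by simp) (by simp [hik]) (by simp)
    (by simp [hjk]) (by simp) (by simp [hjl])
  set F : ℝ × ℝ × ℝ → ℝ := fun p => if |p.2.2 - (p.1 + σ * p.2.1)| ≤ σ * z then 1 else 0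
    with hFdef
  have hF : Measurable F := by
    refine Measurable.ite (measurableSet_le ?_ measurable_const) measurable_const
      measurable_const
    exact ((measurable_snd.comp measurable_snd).sub
      (measurable_fst.add (measurable_const.mul (measurable_fst.comp measurable_snd)))).abs
  have hIF : IndepFun (Ind σ z X D i j) (Ind σ z X D k l) P := by
    have := hind3.comp hF hF
    simp only [Sum.elim_inl, Sum.elim_inr] at this
    exact this
  have := hIF.integral_fun_mul_eq_mul_integral (Ind_int hM.X_meas hM.D_meas i j).aestronglyMeasurable
    (Ind_int hM.X_meas hM.D_meas k l).aestronglyMeasurable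
  exact this

lemma aux_m_nonneg [IsProbabilityMeasure P] (i j : Fin n) :
    0 ≤ ∫ ω, Ind σ z X D i j ω ∂P := integral_nonneg (Ind_nonneg i j)

lemma aux_m_le_one [IsProbabilityMeasure P] (hX : ∀ i, Measurable (X i))
    (hD : ∀ i, Measurable (D i)) (i j : Fin n) : ∫ ω, Ind σ z X D i j ω ∂P ≤ 1 := by
  calc ∫ ω, Ind σ z X D i j ω ∂P ≤ ∫ _ω, (1:ℝ) ∂P :=
        integral_mono (Ind_int hX hD i j) (integrable_const 1) (Ind_le_one i j)
    _ = 1 := by simp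

lemma aux_varsum (hM : IsIIDModel P n σ f X D) :
    ∫ ω, ((∑ p : Fin n × Fin n, Ind σ z X D p.1 p.2 ω)
        - ∫ ω', (∑ p : Fin n × Fin n, Ind σ z X D p.1 p.2 ω') ∂P) ^ 2 ∂P
      = ∑ p : Fin n × Fin n, ∑ q : Fin n × Fin n,
          ((∫ ω, Ind σ z X D p.1 p.2 ω * Ind σ z X D q.1 q.2 ω ∂P)
            - (∫ ω, Ind σ z X D p.1 p.2 ω ∂P) * ∫ ω, Ind σ z X D q.1 q.2 ω ∂P) := by
  haveI := hM.prob
  set m : Fin n × Fin n → ℝ := fun p => ∫ ω, Ind σ z X D p.1 p.2 ω ∂P with hm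
  have hm0 : ∀ p, 0 ≤ m p := fun p => aux_m_nonneg p.1 p.2
  have hm1 : ∀ p, m p ≤ 1 := fun p => aux_m_le_one hM.X_meas hM.D_meas p.1 p.2
  have hES : ∫ ω', (∑ p : Fin n × Fin n, Ind σ z X D p.1 p.2 ω') ∂P
      = ∑ p : Fin n × Fin n, m p :=
    integral_finset_sum _ (fun p _ => Ind_int hM.X_meas hM.D_meas p.1 p.2)
  have hterm_int : ∀ p q : Fin n × Fin n, Integrable
      (fun ω => (Ind σ z X D p.1 p.2 ω - m p) * (Ind σ z X D q.1 q.2 ω - m q)) P := by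
    intro p q
    refine aux_integrable_of_bdd
      (((Ind_meas hM.X_meas hM.D_meas p.1 p.2).sub measurable_const).mul
        ((Ind_meas hM.X_meas hM.D_meas q.1 q.2).sub measurable_const)) 1 fun ω => ?_
    rw [Real.norm_eq_abs, abs_mul]
    have b1 : |Ind σ z X D p.1 p.2 ω - m p| ≤ 1 := abs_le.mpr
      ⟨by linarith [Ind_nonneg (σ := σ) (z := z) (X := X) (D := D) p.1 p.2 ω, hm1 p],
       by linarith [Ind_le_one (σ := σ) (z := z) (X := X) (D := D) p.1 p.2 ω, hm0 p]⟩
    have b2 : |Ind σ z X D q.1 q.2 ω - m q| ≤ 1 := abs_le.mpr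
      ⟨by linarith [Ind_nonneg (σ := σ) (z := z) (X := X) (D := D) q.1 q.2 ω, hm1 q],
       by linarith [Ind_le_one (σ := σ) (z := z) (X := X) (D := D) q.1 q.2 ω, hm0 q]⟩
    nlinarith [abs_nonneg (Ind σ z X D p.1 p.2 ω - m p),
      abs_nonneg (Ind σ z X D q.1 q.2 ω - m q)]
  have hterm : ∀ p q : Fin n × Fin n,
      ∫ ω, (Ind σ z X D p.1 p.2 ω - m p) * (Ind σ z X D q.1 q.2 ω - m q) ∂P
        = (∫ ω, Ind σ z X D p.1 p.2 ω * Ind σ z X D q.1 q.2 ω ∂P) - m p * m q := by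
    intro p q
    have hrw : (fun ω => (Ind σ z X D p.1 p.2 ω - m p) * (Ind σ z X D q.1 q.2 ω - m q))
        = fun ω => Ind σ z X D p.1 p.2 ω * Ind σ z X D q.1 q.2 ω
            - (m p * Ind σ z X D q.1 q.2 ω + m q * Ind σ z X D p.1 p.2 ω - m p * m q) :=
      funext fun ω => by ring
    have hA : Integrable (fun ω => m p * Ind σ z X D q.1 q.2 ω) P :=
      (Ind_int hM.X_meas hM.D_meas q.1 q.2).const_mul _
    have hB : Integrable (fun ω => m q * Ind σ z X D p.1 p.2 ω) P :=
      (Ind_int hM.X_meas hM.D_meas p.1 p.2).const_mul _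
    have hAB : Integrable (fun ω => m p * Ind σ z X D q.1 q.2 ω
        + m q * Ind σ z X D p.1 p.2 ω) P := hA.add hB
    have hint2 : Integrable (fun ω => m p * Ind σ z X D q.1 q.2 ω
        + m q * Ind σ z X D p.1 p.2 ω - m p * m q) P := hAB.sub (integrable_const _)
    rw [hrw, integral_sub (Ind_mul_int hM.X_meas hM.D_meas p.1 p.2 q.1 q.2) hint2,
      integral_sub hAB (integrable_const _), integral_add hA hB,
      integral_const_mul _ _, integral_const_mul _ _, integral_const]
    simp only [measure_univ, ENNReal.toReal_one, probReal_univ, smul_eq_mul, one_mul]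
    have e1 : ∫ (a : Ω), Ind σ z X D q.1 q.2 a ∂P = m q := rfl
    have e2 : ∫ (a : Ω), Ind σ z X D p.1 p.2 a ∂P = m p := rfl
    rw [e1, e2]
    ring
  have hfun : (fun ω => ((∑ p : Fin n × Fin n, Ind σ z X D p.1 p.2 ω)
        - ∫ ω', (∑ p : Fin n × Fin n, Ind σ z X D p.1 p.2 ω') ∂P) ^ 2)
      = fun ω => ∑ p : Fin n × Fin n, ∑ q : Fin n × Fin n,
          (Ind σ z X D p.1 p.2 ω - m p) * (Ind σ z X D q.1 q.2 ω - m q) := by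
    funext ω
    rw [hES, ← Finset.sum_sub_distrib, sq, Finset.sum_mul_sum]
  rw [hfun, integral_finset_sum _ (fun p _ => integrable_finset_sum _ fun q _ => hterm_int p q)]
  refine Finset.sum_congr rfl fun p _ => ?_
  rw [integral_finset_sum _ (fun q _ => hterm_int p q)]
  exact Finset.sum_congr rfl fun q _ => hterm p q

lemma aux_case (hM : IsIIDModel P n σ f X D) (hz : 0 ≤ z) (i j k l : Fin n) :
    (∫ ω, Ind σ z X D i j ω * Ind σ z X D k l ω ∂P)
        - (∫ ω, Ind σ z X D i j ω ∂P) * ∫ ω, Ind σ z X D k l ω ∂P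
      ≤ (if i = j ∧ k = i ∧ l = i then (1:ℝ) else 0)
        + 2 * (σ * z) * ((if i = j ∧ k = i then (1:ℝ) else 0)
          + (if i = j ∧ l = i then (1:ℝ) else 0)
          + (if k = l ∧ i = k then (1:ℝ) else 0)
          + (if k = l ∧ j = k then (1:ℝ) else 0)
          + (if k = i ∧ l = j then (1:ℝ) else 0)
          + (if k = j ∧ l = i then (1:ℝ) else 0))
        + 8 * (σ * z) ^ 2 * ((if k = i then (1:ℝ) else 0) + (if k = j then (1:ℝ) else 0)
          + (if l = i then (1:ℝ) else 0) + (if l = j then (1:ℝ) else 0)) := by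
  classical
  haveI := hM.prob
  have hσz : 0 ≤ σ * z := mul_nonneg hM.sigma_pos.le hz
  have hif : ∀ (c : Prop) [inst : Decidable c], (0:ℝ) ≤ (if c then 1 else 0) := by
    intro c inst; split_ifs <;> norm_num
  set t1 : ℝ := (if i = j ∧ k = i ∧ l = i then (1:ℝ) else 0) with ht1
  set t2 : ℝ := (if i = j ∧ k = i then (1:ℝ) else 0)
    + (if i = j ∧ l = i then (1:ℝ) else 0)
    + (if k = l ∧ i = k then (1:ℝ) else 0)
    + (if k = l ∧ j = k then (1:ℝ) else 0)
    + (if k = i ∧ l = j then (1:ℝ) else 0)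
    + (if k = j ∧ l = i then (1:ℝ) else 0) with ht2
  set t3 : ℝ := (if k = i then (1:ℝ) else 0) + (if k = j then (1:ℝ) else 0)
    + (if l = i then (1:ℝ) else 0) + (if l = j then (1:ℝ) else 0) with ht3
  have h1n : 0 ≤ t1 := by rw [ht1]; exact hif _
  have h2n : 0 ≤ t2 := by
    rw [ht2]; repeat' apply add_nonneg
    all_goals exact hif _
  have h3n : 0 ≤ t3 := by
    rw [ht3]; repeat' apply add_nonneg
    all_goals exact hif _
  have h2n' : 0 ≤ 2 * (σ * z) * t2 := mul_nonneg (by linarith) h2n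
  have h3n' : 0 ≤ 8 * (σ * z) ^ 2 * t3 := mul_nonneg (by positivity) h3n
  have hint := Ind_mul_int (P := P) (σ := σ) (z := z) hM.X_meas hM.D_meas i j k l
  have hcov : (∫ ω, Ind σ z X D i j ω * Ind σ z X D k l ω ∂P)
      - (∫ ω, Ind σ z X D i j ω ∂P) * ∫ ω, Ind σ z X D k l ω ∂P
      ≤ ∫ ω, Ind σ z X D i j ω * Ind σ z X D k l ω ∂P :=
    sub_le_self _ (mul_nonneg (aux_m_nonneg i j) (aux_m_nonneg k l))
  have hle_mij : ∫ ω, Ind σ z X D i j ω * Ind σ z X D k l ω ∂P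
      ≤ ∫ ω, Ind σ z X D i j ω ∂P :=
    integral_mono hint (Ind_int hM.X_meas hM.D_meas i j)
      (fun ω => mul_le_of_le_one_right (Ind_nonneg i j ω) (Ind_le_one k l ω))
  have hle_mkl : ∫ ω, Ind σ z X D i j ω * Ind σ z X D k l ω ∂P
      ≤ ∫ ω, Ind σ z X D k l ω ∂P :=
    integral_mono hint (Ind_int hM.X_meas hM.D_meas k l)
      (fun ω => mul_le_of_le_one_left (Ind_nonneg k l ω) (Ind_le_one i j ω))
  by_cases hover : k = i ∨ k = j ∨ l = i ∨ l = j
  · by_cases hij : i = j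
    · by_cases hkl : k = l
      · have hk : k = i := by
          rcases hover with h | h | h | h
          exacts [h, h.trans hij.symm, hkl.trans h, hkl.trans (h.trans hij.symm)]
        have hl : l = i := hkl.symm.trans hk
        have ht1' : t1 = 1 := by rw [ht1]; exact if_pos ⟨hij, hk, hl⟩
        have hc1 : (∫ ω, Ind σ z X D i j ω * Ind σ z X D k l ω ∂P)
            - (∫ ω, Ind σ z X D i j ω ∂P) * ∫ ω, Ind σ z X D k l ω ∂P ≤ 1 :=
          hcov.trans (hle_mij.trans (aux_m_le_one hM.X_meas hM.D_meas i j))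
        linarith
      · have hd : k = i ∨ l = i := by
          rcases hover with h | h | h | h
          exacts [Or.inl h, Or.inl (h.trans hij.symm), Or.inr h, Or.inr (h.trans hij.symm)]
        have ht2' : 1 ≤ t2 := by
          rw [ht2]
          rcases hd with h | h
          · rw [if_pos (show i = j ∧ k = i from ⟨hij, h⟩)]
            linarith [hif (i = j ∧ l = i), hif (k = l ∧ i = k), hif (k = l ∧ j = k),
              hif (k = i ∧ l = j), hif (k = j ∧ l = i)]
          · rw [if_pos (show i = j ∧ l = i from ⟨hij, h⟩)]
            linarith [hif (i = j ∧ k = i), hif (k = l ∧ i = k), hif (k = l ∧ j = k),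
              hif (k = i ∧ l = j), hif (k = j ∧ l = i)]
        have hc : (∫ ω, Ind σ z X D i j ω * Ind σ z X D k l ω ∂P)
            - (∫ ω, Ind σ z X D i j ω ∂P) * ∫ ω, Ind σ z X D k l ω ∂P ≤ 2 * (σ * z) :=
          hcov.trans (hle_mkl.trans (aux_L1 hM hz hkl))
        have hmul : 2 * (σ * z) * 1 ≤ 2 * (σ * z) * t2 :=
          mul_le_mul_of_nonneg_left ht2' (by linarith)
        linarith
    · have hc : (∫ ω, Ind σ z X D i j ω * Ind σ z X D k l ω ∂P)
          - (∫ ω, Ind σ z X D i j ω ∂P) * ∫ ω, Ind σ z X D k l ω ∂P ≤ 2 * (σ * z) :=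
        hcov.trans (hle_mij.trans (aux_L1 hM hz hij))
      by_cases hkl : k = l
      · have hd : k = i ∨ k = j := by
          rcases hover with h | h | h | h
          exacts [Or.inl h, Or.inr h, Or.inl (hkl.trans h), Or.inr (hkl.trans h)]
        have ht2' : 1 ≤ t2 := by
          rw [ht2]
          rcases hd with h | h
          · rw [if_pos (show k = l ∧ i = k from ⟨hkl, h.symm⟩)]
            linarith [hif (i = j ∧ k = i), hif (i = j ∧ l = i), hif (k = l ∧ j = k),
              hif (k = i ∧ l = j), hif (k = j ∧ l = i)]
          · rw [if_pos (show k = l ∧ j = k from ⟨hkl, h.symm⟩)]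
            linarith [hif (i = j ∧ k = i), hif (i = j ∧ l = i), hif (k = l ∧ i = k),
              hif (k = i ∧ l = j), hif (k = j ∧ l = i)]
        have hmul : 2 * (σ * z) * 1 ≤ 2 * (σ * z) * t2 :=
          mul_le_mul_of_nonneg_left ht2' (by linarith)
        linarith
      · by_cases hsame1 : k = i ∧ l = j
        · have ht2' : 1 ≤ t2 := by
            rw [ht2, if_pos hsame1]
            linarith [hif (i = j ∧ k = i), hif (i = j ∧ l = i), hif (k = l ∧ i = k),
              hif (k = l ∧ j = k), hif (k = j ∧ l = i)]
          have hmul : 2 * (σ * z) * 1 ≤ 2 * (σ * z) * t2 :=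
            mul_le_mul_of_nonneg_left ht2' (by linarith)
          linarith
        · by_cases hsame2 : k = j ∧ l = i
          · have ht2' : 1 ≤ t2 := by
              rw [ht2, if_pos hsame2]
              linarith [hif (i = j ∧ k = i), hif (i = j ∧ l = i), hif (k = l ∧ i = k),
                hif (k = l ∧ j = k), hif (k = i ∧ l = j)]
            have hmul : 2 * (σ * z) * 1 ≤ 2 * (σ * z) * t2 :=
              mul_le_mul_of_nonneg_left ht2' (by linarith)
            linarith
          · have hprod8 : ∫ ω, Ind σ z X D i j ω * Ind σ z X D k l ω ∂P
                ≤ 8 * (σ * z) ^ 2 := by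
              by_cases hki : k = i
              · have hlj : l ≠ j := fun h => hsame1 ⟨hki, h⟩
                have hli : l ≠ i := fun h => hkl (hki.trans h.symm)
                subst hki
                exact aux_L2a hM hz hij (Ne.symm hli) (Ne.symm hlj)
              · by_cases hlj : l = j
                · subst hlj
                  exact aux_L2c hM hz hij (fun h => hki h.symm) (fun h => hkl h.symm)
                · by_cases hkj : k = j
                  · subst hkj
                    exact aux_L2b hM hz hij (fun h => hsame2 ⟨rfl, h.symm⟩) hkl
                  · have hli : l = i := by
                      rcases hover with h | h | h | h
                      exacts [absurd h hki, absurd h hkj, h, absurd h hlj]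
                    subst hli
                    exact aux_L2b' hM hz hij (fun h => hki h.symm) (fun h => hkj h.symm)
            have ht3' : 1 ≤ t3 := by
              rw [ht3]
              rcases hover with h | h | h | h
              · rw [if_pos h]
                linarith [hif (k = j), hif (l = i), hif (l = j)]
              · rw [if_pos h]
                linarith [hif (k = i), hif (l = i), hif (l = j)]
              · rw [if_pos h]
                linarith [hif (k = i), hif (k = j), hif (l = j)]
              · rw [if_pos h]
                linarith [hif (k = i), hif (k = j), hif (l = i)]
            have hmul : 8 * (σ * z) ^ 2 * 1 ≤ 8 * (σ * z) ^ 2 * t3 :=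
              mul_le_mul_of_nonneg_left ht3' (by positivity)
            have hc := hcov.trans hprod8
            linarith
  · push_neg at hover
    have hz0 := aux_zero (z := z) hM (Ne.symm hover.1) (Ne.symm hover.2.2.1)
      (Ne.symm hover.2.1) (Ne.symm hover.2.2.2)
    rw [hz0]
    simp only [sub_self]
    linarith


lemma aux_main (hM : IsIIDModel P n σ f X D) (hz : 0 ≤ z) :
    ∫ ω, ((∑ i, ∑ j, (if |X j ω - Ychild σ X D i ω| ≤ σ * z then (1:ℝ) else 0))
        - ∫ ω', (∑ i, ∑ j,
            (if |X j ω' - Ychild σ X D i ω'| ≤ σ * z then (1:ℝ) else 0)) ∂P) ^ 2 ∂P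
      ≤ (1 + 12 * z + 32 * z ^ 2) * ((n:ℝ) + σ * (n:ℝ) ^ 2 + σ ^ 2 * (n:ℝ) ^ 3) := by
  classical
  haveI := hM.prob
  have hσz : 0 ≤ σ * z := mul_nonneg hM.sigma_pos.le hz
  have hσ0 : 0 ≤ σ := hM.sigma_pos.le
  have hconv : ∀ ω : Ω, (∑ i, ∑ j, (if |X j ω - Ychild σ X D i ω| ≤ σ * z then (1:ℝ) else 0))
      = ∑ p : Fin n × Fin n, Ind σ z X D p.1 p.2 ω := fun ω =>
    (Fintype.sum_prod_type (fun p : Fin n × Fin n => Ind σ z X D p.1 p.2 ω)).symm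
  simp only [hconv]
  rw [aux_varsum hM]
  have hsum_le : ∑ p : Fin n × Fin n, ∑ q : Fin n × Fin n,
        ((∫ ω, Ind σ z X D p.1 p.2 ω * Ind σ z X D q.1 q.2 ω ∂P)
          - (∫ ω, Ind σ z X D p.1 p.2 ω ∂P) * ∫ ω, Ind σ z X D q.1 q.2 ω ∂P)
      ≤ ∑ p : Fin n × Fin n, ∑ q : Fin n × Fin n,
        ((if p.1 = p.2 ∧ q.1 = p.1 ∧ q.2 = p.1 then (1:ℝ) else 0)
          + 2 * (σ * z) * ((if p.1 = p.2 ∧ q.1 = p.1 then (1:ℝ) else 0)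
            + (if p.1 = p.2 ∧ q.2 = p.1 then (1:ℝ) else 0)
            + (if q.1 = q.2 ∧ p.1 = q.1 then (1:ℝ) else 0)
            + (if q.1 = q.2 ∧ p.2 = q.1 then (1:ℝ) else 0)
            + (if q.1 = p.1 ∧ q.2 = p.2 then (1:ℝ) else 0)
            + (if q.1 = p.2 ∧ q.2 = p.1 then (1:ℝ) else 0))
          + 8 * (σ * z) ^ 2 * ((if q.1 = p.1 then (1:ℝ) else 0)
            + (if q.1 = p.2 then (1:ℝ) else 0)
            + (if q.2 = p.1 then (1:ℝ) else 0) + (if q.2 = p.2 then (1:ℝ) else 0))) :=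
    Finset.sum_le_sum fun p _ => Finset.sum_le_sum fun q _ =>
      aux_case hM hz p.1 p.2 q.1 q.2
  refine le_trans hsum_le ?_
  have hcount : ∑ p : Fin n × Fin n, ∑ q : Fin n × Fin n,
      ((if p.1 = p.2 ∧ q.1 = p.1 ∧ q.2 = p.1 then (1:ℝ) else 0)
        + 2 * (σ * z) * ((if p.1 = p.2 ∧ q.1 = p.1 then (1:ℝ) else 0)
          + (if p.1 = p.2 ∧ q.2 = p.1 then (1:ℝ) else 0)
          + (if q.1 = q.2 ∧ p.1 = q.1 then (1:ℝ) else 0)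
          + (if q.1 = q.2 ∧ p.2 = q.1 then (1:ℝ) else 0)
          + (if q.1 = p.1 ∧ q.2 = p.2 then (1:ℝ) else 0)
          + (if q.1 = p.2 ∧ q.2 = p.1 then (1:ℝ) else 0))
        + 8 * (σ * z) ^ 2 * ((if q.1 = p.1 then (1:ℝ) else 0)
          + (if q.1 = p.2 then (1:ℝ) else 0)
          + (if q.2 = p.1 then (1:ℝ) else 0) + (if q.2 = p.2 then (1:ℝ) else 0)))
      = (n:ℝ) + 2 * (σ * z) * (6 * (n:ℝ) ^ 2) + 8 * (σ * z) ^ 2 * (4 * (n:ℝ) ^ 3) := by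
    have hone : ∑ x : Fin n, ∑ x1 : Fin n, ∑ x2 : Fin n,
        (if x1 = x then if x2 = x then (1:ℝ) else 0 else 0) = (n:ℝ) := by
      have h : ∀ x : Fin n, ∑ x1 : Fin n, ∑ x2 : Fin n,
          (if x1 = x then if x2 = x then (1:ℝ) else 0 else 0) = 1 := by
        intro x
        rw [Finset.sum_comm]
        simp [Finset.sum_ite_eq']
      simp [h]
    simp only [Fintype.sum_prod_type]
    simp [ite_and, mul_add, add_mul, mul_ite, mul_one, mul_zero, Finset.sum_add_distrib,
      Finset.sum_ite_eq, Finset.sum_ite_eq', Finset.sum_const, Finset.mul_sum,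
      Finset.card_univ, Fintype.card_fin, nsmul_eq_mul]
    rw [hone]
    ring
  rw [hcount]
  have hN : (0:ℝ) ≤ (n:ℝ) := Nat.cast_nonneg n
  nlinarith [mul_nonneg hz hN, mul_nonneg (mul_nonneg hz hz) hN,
    mul_nonneg hσ0 (mul_nonneg hN hN),
    mul_nonneg (mul_nonneg (mul_nonneg hz hz) hσ0) (mul_nonneg hN hN),
    mul_nonneg (mul_nonneg hσ0 hσ0) (mul_nonneg hN (mul_nonneg hN hN)),
    mul_nonneg (mul_nonneg hz (mul_nonneg hσ0 hσ0)) (mul_nonneg hN (mul_nonneg hN hN))]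

end Quant

end AuxProof

/-- Proposition 13: variance bound for the counting estimator. -/
theorem counting_estimator_variance
    (f : ℝ → ℝ) (hmeas : Measurable f) (hnonneg : ∀ z, 0 ≤ f z) (hprob : ∫ z, f z = 1)
    (hmom : Integrable fun x => |x| * f x)
    (z : ℝ) (hz : 0 ≤ z) :
    ∃ C : ℝ, 0 < C ∧
      ∀ (Ω : Type) (_ : MeasurableSpace Ω) (P : Measure Ω)
        (n : ℕ) (σ : ℝ) (X D : Fin n → Ω → ℝ),
        IsIIDModel P n σ f X D →
        (∫ ω, (((n : ℝ)⁻¹ * ∑ i, ∑ j,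
              (if |X j ω - Ychild σ X D i ω| ≤ σ * z then (1:ℝ) else 0))
              - 2 * σ * ((n : ℝ) - 1) * z
            - ∫ ω', (((n : ℝ)⁻¹ * ∑ i, ∑ j,
                (if |X j ω' - Ychild σ X D i ω'| ≤ σ * z then (1:ℝ) else 0))
                - 2 * σ * ((n : ℝ) - 1) * z) ∂P) ^ 2 ∂P)
          ≤ C * ((n : ℝ)⁻¹ + σ + σ ^ 2 * n) := by
  refine ⟨1 + 12 * z + 32 * z ^ 2, by nlinarith, ?_⟩
  intro Ω mΩ P n σ X D hM
  haveI := hM.prob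
  have hσ0 : 0 < σ := hM.sigma_pos
  by_cases hn : n = 0
  · subst hn
    have h0 : ∀ ω : Ω, ((0 : ℝ)⁻¹ * ∑ i : Fin 0, ∑ j : Fin 0,
        (if |X j ω - Ychild σ X D i ω| ≤ σ * z then (1:ℝ) else 0))
        - 2 * σ * ((0 : ℝ) - 1) * z = 2 * σ * z := by
      intro ω
      simp
    simp only [Nat.cast_zero] at *
    simp only [h0]
    have hinner : ∫ (_ω' : Ω), (2 * σ * z : ℝ) ∂P = 2 * σ * z := by simp
    rw [hinner]
    simp only [sub_self]
    have hzero : ∫ (_ω : Ω), ((0:ℝ)) ^ 2 ∂P = 0 := by simp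
    rw [hzero]
    have hr : (0:ℝ)⁻¹ + σ + σ ^ 2 * (0:ℝ) = σ := by norm_num
    rw [hr]
    exact mul_nonneg (by nlinarith) hσ0.le
  · have hn0 : (0:ℝ) < (n:ℝ) := by exact_mod_cast Nat.pos_of_ne_zero hn
    have hAint : Integrable (fun ω => ∑ i, ∑ j,
        (if |X j ω - Ychild σ X D i ω| ≤ σ * z then (1:ℝ) else 0)) P := by
      apply integrable_finset_sum
      intro i _
      apply integrable_finset_sum
      intro j _
      exact Ind_int hM.X_meas hM.D_meas i j
    have hmean : ∫ ω', (((n : ℝ)⁻¹ * ∑ i, ∑ j,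
          (if |X j ω' - Ychild σ X D i ω'| ≤ σ * z then (1:ℝ) else 0))
          - 2 * σ * ((n : ℝ) - 1) * z) ∂P
        = (n : ℝ)⁻¹ * (∫ ω', (∑ i, ∑ j,
            (if |X j ω' - Ychild σ X D i ω'| ≤ σ * z then (1:ℝ) else 0)) ∂P)
          - 2 * σ * ((n : ℝ) - 1) * z := by
      rw [integral_sub (hAint.const_mul _) (integrable_const _), integral_const_mul _ _,
        integral_const]
      simp [measure_univ]
    rw [hmean]
    have hpt : (fun ω => (((n : ℝ)⁻¹ * ∑ i, ∑ j,
          (if |X j ω - Ychild σ X D i ω| ≤ σ * z then (1:ℝ) else 0))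
          - 2 * σ * ((n : ℝ) - 1) * z
          - ((n : ℝ)⁻¹ * (∫ ω', (∑ i, ∑ j,
              (if |X j ω' - Ychild σ X D i ω'| ≤ σ * z then (1:ℝ) else 0)) ∂P)
            - 2 * σ * ((n : ℝ) - 1) * z)) ^ 2)
        = fun ω => ((n : ℝ)⁻¹) ^ 2 * (((∑ i, ∑ j,
            (if |X j ω - Ychild σ X D i ω| ≤ σ * z then (1:ℝ) else 0))
            - ∫ ω', (∑ i, ∑ j,
              (if |X j ω' - Ychild σ X D i ω'| ≤ σ * z then (1:ℝ) else 0)) ∂P) ^ 2) :=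
      funext fun ω => by ring
    rw [hpt, integral_const_mul _ _]
    have key := aux_main hM hz
    calc ((n : ℝ)⁻¹) ^ 2 * ∫ ω, (((∑ i, ∑ j,
            (if |X j ω - Ychild σ X D i ω| ≤ σ * z then (1:ℝ) else 0))
            - ∫ ω', (∑ i, ∑ j,
              (if |X j ω' - Ychild σ X D i ω'| ≤ σ * z then (1:ℝ) else 0)) ∂P) ^ 2) ∂P
        ≤ ((n : ℝ)⁻¹) ^ 2 * ((1 + 12 * z + 32 * z ^ 2)
            * ((n:ℝ) + σ * (n:ℝ) ^ 2 + σ ^ 2 * (n:ℝ) ^ 3)) :=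
          mul_le_mul_of_nonneg_left key (by positivity)
      _ = (1 + 12 * z + 32 * z ^ 2) * ((n : ℝ)⁻¹ + σ + σ ^ 2 * n) := by
          field_simp
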